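/- In a strongly connected directed graph, if for every nonempty proper subset S of nodes the minimum-cost arc entering S has cost at most ξ times the minimum-cost arc leaving S, then for all nodes i and j the bottleneck costs satisfy b(j,i) ≤ ξ·b(i,j). -/

import Mathlib

open scoped Classical

variable {V : Type*}

/-- `IsWalk A u v l`: `u :: l` is a directed walk from `u` to `v` in the digraph with
arc relation `A`. -/
def IsWalk (A : V → V → Prop) (u v : V) (l : List V) : Prop :=
  List.Chain A u l ∧ (u :: l).getLast (List.cons_ne_nil u l) = v

/-- The list of arcs of the walk `u :: l`. -/
def walkArcs (u : V) (l : List V) : List (V × V) := (u :: l).zip l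

/-- The cost of a walk: the sum of the costs of its arcs. -/
noncomputable def walkCost (c : V → V → ℝ) (u : V) (l : List V) : ℝ :=
  ((walkArcs u l).map fun e => c e.1 e.2).sum

/-- A (simple) directed cycle through the arc `(x, y)`: the arc `(x, y)` together with a
walk from `y` back to `x` visiting pairwise distinct nodes. -/
def IsCycleThrough (A : V → V → Prop) (x y : V) (l : List V) : Prop :=
  A x y ∧ IsWalk A y x l ∧ (y :: l).Nodup

/-- The arcs of the cycle through `(x, y)` given by the return walk `y :: l`. -/
def cycleArcs (x y : V) (l : List V) : List (V × V) := (x, y) :: walkArcs y l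

/-- `G = (V, A, c)` is `ξ`-min-balanced: every arc lies on a directed cycle all of whose
arcs have cost at most `ξ` times the cost of the given arc. -/
def MinBalanced (A : V → V → Prop) (c : V → V → ℝ) (ξ : ℝ) : Prop :=
  ∀ x y, A x y → ∃ l, IsCycleThrough A x y l ∧
    ∀ f ∈ cycleArcs x y l, c f.1 f.2 ≤ ξ * c x y

/-- A digraph is strongly connected if there is a directed walk between any two nodes. -/
def StronglyConnected (A : V → V → Prop) : Prop := ∀ u v : V, ∃ l, IsWalk A u v l

/-- The bottleneck cost `b(i,j)`: the least `t` such that there is a directed `i`–`j`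
walk all of whose arcs have cost at most `t`. -/
noncomputable def bottleneck (A : V → V → Prop) (c : V → V → ℝ) (i j : V) : ℝ :=
  sInf {t | ∃ l, IsWalk A i j l ∧ ∀ f ∈ walkArcs i l, c f.1 f.2 ≤ t}

/-- The balance value `β(e)` of the arc `e = (x, y)`: the smallest `r` such that there is
a directed cycle through `e` all of whose arcs have cost at most `r`. -/
noncomputable def balanceValue (A : V → V → Prop) (c : V → V → ℝ) (x y : V) : ℝ :=
  sInf {r | ∃ l, IsCycleThrough A x y l ∧ ∀ f ∈ cycleArcs x y l, c f.1 f.2 ≤ r}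

section Aux

variable {A : V → V → Prop} {c : V → V → ℝ}

lemma isWalk_nil {u v : V} : IsWalk A u v [] ↔ u = v := by
  simp [IsWalk, List.Chain]

lemma isWalk_cons {u v a : V} {l : List V} :
    IsWalk A u v (a :: l) ↔ A u a ∧ IsWalk A a v l := by
  simp only [IsWalk, List.Chain, List.isChain_cons_cons, List.getLast_cons (List.cons_ne_nil a l), and_assoc]

lemma walkArcs_nil {u : V} : walkArcs u ([] : List V) = [] := rfl

lemma walkArcs_cons {u a : V} {l : List V} :
    walkArcs u (a :: l) = (u, a) :: walkArcs a l := rfl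

lemma exists_crossing {P : V → Prop} :
    ∀ {u : V} {l : List V} {v : V}, IsWalk A u v l → ¬ P u → P v →
      ∃ f ∈ walkArcs u l, ¬ P f.1 ∧ P f.2 := by
  intro u l
  induction l generalizing u with
  | nil =>
    intro v h hu hv
    rw [isWalk_nil] at h
    subst h
    exact absurd hv hu
  | cons a l ih =>
    intro v h hu hv
    rw [isWalk_cons] at h
    by_cases ha : P a
    · exact ⟨(u, a), by simp [walkArcs_cons], hu, ha⟩
    · obtain ⟨f, hf, h1, h2⟩ := ih h.2 ha hv
      exact ⟨f, by simp [walkArcs_cons, hf], h1, h2⟩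

lemma walkArcs_rel :
    ∀ {u : V} {l : List V} {v : V}, IsWalk A u v l → ∀ f ∈ walkArcs u l, A f.1 f.2 := by
  intro u l
  induction l generalizing u with
  | nil => intro v _ f hf; simp [walkArcs_nil] at hf
  | cons a l ih =>
    intro v h f hf
    rw [isWalk_cons] at h
    rw [walkArcs_cons, List.mem_cons] at hf
    rcases hf with rfl | hf
    · exact h.1
    · exact ih h.2 f hf

lemma walk_extend :
    ∀ {u : V} {l : List V} {v y : V}, IsWalk A u v l → A v y →
      IsWalk A u y (l ++ [y]) ∧ walkArcs u (l ++ [y]) = walkArcs u l ++ [(v, y)] := by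
  intro u l
  induction l generalizing u with
  | nil =>
    intro v y h hvy
    rw [isWalk_nil] at h
    subst h
    refine ⟨isWalk_cons.mpr ⟨hvy, isWalk_nil.mpr rfl⟩, rfl⟩
  | cons a l ih =>
    intro v y h hvy
    rw [isWalk_cons] at h
    obtain ⟨hw, harcs⟩ := ih h.2 hvy
    refine ⟨isWalk_cons.mpr ⟨h.1, hw⟩, ?_⟩
    simp [walkArcs_cons, harcs]

lemma list_max {α : Type*} [LinearOrder α] :
    ∀ (l : List α) (x : α), ∃ m ∈ x :: l, ∀ e ∈ x :: l, e ≤ m := by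
  intro l
  induction l with
  | nil => intro x; exact ⟨x, by simp, by simp⟩
  | cons a l ih =>
    intro x
    obtain ⟨m, hm, hle⟩ := ih a
    rcases le_total x m with h | h
    · refine ⟨m, by simp [List.mem_cons] at hm ⊢; tauto, ?_⟩
      intro e he
      rcases List.mem_cons.mp he with rfl | he
      · exact h
      · exact hle e he
    · refine ⟨x, by simp, ?_⟩
      intro e he
      rcases List.mem_cons.mp he with rfl | he
      · exact le_rfl
      · exact (hle e he).trans h

lemma bottleneck_attained [Fintype V]
    (hc : ∀ x y, A x y → 0 ≤ c x y) (hsc : StronglyConnected A) (i j : V) :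
    0 ≤ bottleneck A c i j ∧
      ∃ l, IsWalk A i j l ∧ ∀ f ∈ walkArcs i l, c f.1 f.2 ≤ bottleneck A c i j := by
  by_cases hij : i = j
  · subst hij
    have huniv : {t | ∃ l, IsWalk A i i l ∧ ∀ f ∈ walkArcs i l, c f.1 f.2 ≤ t}
        = (Set.univ : Set ℝ) := by
      ext t
      simp only [Set.mem_univ, iff_true, Set.mem_setOf_eq]
      exact ⟨[], isWalk_nil.mpr rfl, by simp [walkArcs_nil]⟩
    have hb : bottleneck A c i i = 0 := by
      rw [show bottleneck A c i i
          = sInf {t | ∃ l, IsWalk A i i l ∧ ∀ f ∈ walkArcs i l, c f.1 f.2 ≤ t} from rfl,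
        huniv]
      apply Real.sInf_of_not_bddBelow
      rintro ⟨x, hx⟩
      have := hx (Set.mem_univ (x - 1))
      linarith
    rw [hb]
    exact ⟨le_rfl, [], isWalk_nil.mpr rfl, by simp [walkArcs_nil]⟩
  · set M := {t | ∃ l, IsWalk A i j l ∧ ∀ f ∈ walkArcs i l, c f.1 f.2 ≤ t} with hMdef
    have hbot : bottleneck A c i j = sInf M := rfl
    have key : ∀ l, IsWalk A i j l → ∃ m, m ∈ M ∧
        (∃ e ∈ walkArcs i l, c e.1 e.2 = m) ∧ ∀ f ∈ walkArcs i l, c f.1 f.2 ≤ m := by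
      intro l hw
      match l with
      | [] => exact absurd (isWalk_nil.mp hw) hij
      | a :: l' =>
        obtain ⟨m, hmm, hmax⟩ :=
          list_max ((walkArcs a l').map fun e => c e.1 e.2) (c i a)
        have hlist : (walkArcs i (a :: l')).map (fun e => c e.1 e.2)
            = c i a :: (walkArcs a l').map (fun e => c e.1 e.2) := by
          rw [walkArcs_cons, List.map_cons]
        rw [← hlist] at hmm hmax
        obtain ⟨e, he, hem⟩ := List.mem_map.mp hmm
        have hball : ∀ f ∈ walkArcs i (a :: l'), c f.1 f.2 ≤ m := by
          intro f hf
          exact hmax _ (List.mem_map.mpr ⟨f, hf, rfl⟩)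
        exact ⟨m, ⟨a :: l', hw, hball⟩, ⟨e, he, hem⟩, hball⟩
    have hMnonneg : ∀ t ∈ M, 0 ≤ t := by
      rintro t ⟨l, hw, hb⟩
      match l with
      | [] => exact absurd (isWalk_nil.mp hw) hij
      | a :: l' =>
        have ha : A i a := (isWalk_cons.mp hw).1
        have : (i, a) ∈ walkArcs i (a :: l') := by simp [walkArcs_cons]
        exact le_trans (hc i a ha) (hb _ this)
    have hbdd : BddBelow M := ⟨0, fun t ht => hMnonneg t ht⟩
    obtain ⟨lsc, hwsc⟩ := hsc i j
    obtain ⟨m0, hm0M, _, _⟩ := key lsc hwsc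
    have hMne : M.Nonempty := ⟨m0, hm0M⟩
    set F := Set.range (fun p : V × V => c p.1 p.2) with hF
    set M' := M ∩ F with hM'
    have hkey' : ∀ t ∈ M, ∃ m ∈ M', m ≤ t := by
      rintro t ⟨l, hw, hb⟩
      obtain ⟨m, hmM, ⟨e, he, hem⟩, _⟩ := key l hw
      exact ⟨m, ⟨hmM, ⟨e, hem⟩⟩, hem ▸ hb e he⟩
    have hM'fin : M'.Finite :=
      Set.Finite.subset (Set.finite_range _) (fun t ht => ht.2)
    obtain ⟨m1, hm1⟩ := hkey' m0 hm0M
    have hM'ne : M'.Nonempty := ⟨m1, hm1.1⟩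
    have hmem := hM'ne.csInf_mem hM'fin
    have heq : sInf M = sInf M' := by
      refine le_antisymm (csInf_le hbdd hmem.1) (le_csInf hMne ?_)
      intro t ht
      obtain ⟨m, hmM', hmt⟩ := hkey' t ht
      exact le_trans (csInf_le (hbdd.mono (Set.inter_subset_left)) hmM') hmt
    rw [hbot, heq]
    obtain ⟨l, hw, hb⟩ := hmem.1
    exact ⟨hMnonneg _ hmem.1, l, hw, hb⟩

end Aux

/-- In a strongly connected digraph, if for every nonempty proper node
subset `S` the minimum cost of an arc entering `S` is at most `ξ` times the minimum cost
of an arc leaving `S`, then `b(j,i) ≤ ξ·b(i,j)` for all nodes `i`, `j`. -/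
theorem cut_condition_implies_bottleneck [Fintype V] (A : V → V → Prop) (c : V → V → ℝ)
    (hc : ∀ x y, A x y → 0 ≤ c x y) (ξ : ℝ) (hξ : 1 ≤ ξ)
    (hsc : StronglyConnected A)
    (hcut : ∀ S : Set V, S.Nonempty → S ≠ Set.univ →
      sInf {t | ∃ x ∉ S, ∃ y ∈ S, A x y ∧ c x y = t} ≤
        ξ * sInf {t | ∃ x ∈ S, ∃ y ∉ S, A x y ∧ c x y = t}) :
    ∀ i j : V, bottleneck A c j i ≤ ξ * bottleneck A c i j := by
  intro i j
  have hξ0 : (0 : ℝ) ≤ ξ := le_trans zero_le_one hξ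
  obtain ⟨ht0, l0, hw0, hb0⟩ := bottleneck_attained hc hsc i j
  set t0 := bottleneck A c i j with ht0def
  set S : Set V :=
    {v | ∃ l, IsWalk A j v l ∧ ∀ f ∈ walkArcs j l, c f.1 f.2 ≤ ξ * t0} with hSdef
  have hjS : j ∈ S := ⟨[], isWalk_nil.mpr rfl, by simp [walkArcs_nil]⟩
  have hiS : i ∈ S := by
    by_contra hiS
    have hclose : ∀ x ∈ S, ∀ y, A x y → c x y ≤ ξ * t0 → y ∈ S := by
      rintro x ⟨l, hw, hb⟩ y hxy hcxy
      obtain ⟨hw', harcs⟩ := walk_extend hw hxy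
      refine ⟨l ++ [y], hw', ?_⟩
      rw [harcs]
      intro f hf
      rcases List.mem_append.mp hf with h | h
      · exact hb f h
      · simp only [List.mem_singleton] at h
        subst h
        exact hcxy
    set L := {t | ∃ x ∈ S, ∃ y ∉ S, A x y ∧ c x y = t} with hLdef
    set E := {t | ∃ x ∉ S, ∃ y ∈ S, A x y ∧ c x y = t} with hEdef
    have hLgt : ∀ t ∈ L, ξ * t0 < t := by
      rintro t ⟨x, hx, y, hy, hxy, rfl⟩
      by_contra h
      push_neg at h
      exact hy (hclose x hx y hxy h)
    obtain ⟨lji, hwji⟩ := hsc j i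
    obtain ⟨f, hf, hf1, hf2⟩ :=
      exists_crossing (P := fun v => v ∉ S) hwji (not_not.mpr hjS) hiS
    have hfL : c f.1 f.2 ∈ L := ⟨f.1, not_not.mp hf1, f.2, hf2, walkArcs_rel hwji f hf, rfl⟩
    have hLfin : L.Finite := by
      apply Set.Finite.subset (Set.finite_range fun p : V × V => c p.1 p.2)
      rintro t ⟨x, _, y, _, _, rfl⟩
      exact ⟨(x, y), rfl⟩
    have hLmem := Set.Nonempty.csInf_mem ⟨_, hfL⟩ hLfin
    have hLbig : ξ * t0 < sInf L := hLgt _ hLmem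
    obtain ⟨g, hg, hg1, hg2⟩ := exists_crossing (P := fun v => v ∈ S) hw0 hiS hjS
    have hgE : c g.1 g.2 ∈ E := ⟨g.1, hg1, g.2, hg2, walkArcs_rel hw0 g hg, rfl⟩
    have hEbdd : BddBelow E := by
      refine ⟨0, ?_⟩
      rintro t ⟨x, _, y, _, hxy, rfl⟩
      exact hc _ _ hxy
    have hEle : sInf E ≤ t0 := le_trans (csInf_le hEbdd hgE) (hb0 g hg)
    have hSc_ne : (Sᶜ : Set V).Nonempty := ⟨i, hiS⟩
    have hSc_proper : (Sᶜ : Set V) ≠ Set.univ := by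
      intro h
      have : j ∈ (Sᶜ : Set V) := h ▸ Set.mem_univ j
      exact this hjS
    have hcut' := hcut Sᶜ hSc_ne hSc_proper
    have hA : {t | ∃ x ∉ (Sᶜ : Set V), ∃ y ∈ (Sᶜ : Set V), A x y ∧ c x y = t} = L := by
      ext t
      simp only [hLdef, Set.mem_setOf_eq, Set.mem_compl_iff, not_not]
    have hB : {t | ∃ x ∈ (Sᶜ : Set V), ∃ y ∉ (Sᶜ : Set V), A x y ∧ c x y = t} = E := by
      ext t
      simp only [hEdef, Set.mem_setOf_eq, Set.mem_compl_iff, not_not]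
    rw [hA, hB] at hcut'
    have := mul_le_mul_of_nonneg_left hEle hξ0
    linarith
  obtain ⟨l, hw, hb⟩ := hiS
  by_cases hji : j = i
  · subst hji
    have huniv : {t | ∃ l, IsWalk A j j l ∧ ∀ f ∈ walkArcs j l, c f.1 f.2 ≤ t}
        = (Set.univ : Set ℝ) := by
      ext t
      simp only [Set.mem_univ, iff_true, Set.mem_setOf_eq]
      exact ⟨[], isWalk_nil.mpr rfl, by simp [walkArcs_nil]⟩
    have hbz : bottleneck A c j j = 0 := by
      rw [show bottleneck A c j j
          = sInf {t | ∃ l, IsWalk A j j l ∧ ∀ f ∈ walkArcs j l, c f.1 f.2 ≤ t} from rfl,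
        huniv]
      apply Real.sInf_of_not_bddBelow
      rintro ⟨x, hx⟩
      have := hx (Set.mem_univ (x - 1))
      linarith
    rw [hbz]
    exact mul_nonneg hξ0 ht0
  · have hbdd : BddBelow {t | ∃ l, IsWalk A j i l ∧ ∀ f ∈ walkArcs j l, c f.1 f.2 ≤ t} := by
      refine ⟨0, ?_⟩
      rintro t ⟨l', hw', hb'⟩
      match l' with
      | [] => exact absurd (isWalk_nil.mp hw') hji
      | a :: l'' =>
        have ha : A j a := (isWalk_cons.mp hw').1
        have hmem : (j, a) ∈ walkArcs j (a :: l'') := by simp [walkArcs_cons]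
        exact le_trans (hc j a ha) (hb' _ hmem)
    exact csInf_le hbdd ⟨l, hw, hb⟩
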